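/- Let n ≥ 2 and 1 ≤ m ≤ n−1. For every regular n-gon with center c, circumradius R > 0 and orientation θ, and every point M in its plane with L = |M − c|, the cyclic average satisfies S_n^{(2m)} = (R² + L²)^m + ∑_{k=1}^{⌊m/2⌋} C(m,2k)·C(2k,k)·R^{2k}·L^{2k}·(R² + L²)^{m−2k}. -/

import Mathlib

open Complex Real Finset

lemma sum_exp_pow (n : ℕ) (hn : 0 < n) (d : ℤ) (hd : d.natAbs < n) :
    ∑ k ∈ Finset.range n, (Complex.exp (2 * Real.pi * Complex.I * d / n)) ^ k
      = if d = 0 then (n : ℂ) else 0 := by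
  rcases eq_or_ne d 0 with h0 | h0
  · simp [h0]
  · rw [if_neg h0]
    have hn0 : (n : ℂ) ≠ 0 := Nat.cast_ne_zero.mpr hn.ne'
    have hpi : (Real.pi : ℂ) ≠ 0 := by exact_mod_cast Real.pi_ne_zero
    have h2 : (2 : ℂ) * Real.pi * Complex.I ≠ 0 := by
      simp [hpi, Complex.I_ne_zero]
    have hx1 : Complex.exp (2 * Real.pi * Complex.I * d / n) ≠ 1 := by
      intro h
      rw [Complex.exp_eq_one_iff] at h
      obtain ⟨j, hj⟩ := h
      field_simp at hj
      have hdc : (2*Real.pi*Complex.I) * (d:ℂ) = (2*Real.pi*Complex.I) * ((j*n : ℤ):ℂ) := by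
        push_cast; linear_combination (2*Real.pi*Complex.I) * hj
      have hdz : d = j * n := by exact_mod_cast mul_left_cancel₀ h2 hdc
      have hj0 : j ≠ 0 := by rintro rfl; simp at hdz; exact h0 hdz
      have hna : d.natAbs = j.natAbs * n := by
        rw [hdz, Int.natAbs_mul, Int.natAbs_natCast]
      have h1 : 1 ≤ j.natAbs := Int.natAbs_pos.mpr hj0
      have := Nat.le_mul_of_pos_left n (Int.natAbs_pos.mpr hj0)
      omega
    have hxn : (Complex.exp (2 * Real.pi * Complex.I * d / n)) ^ n = 1 := by
      rw [← Complex.exp_nat_mul]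
      have : (n:ℂ) * (2 * Real.pi * Complex.I * d / n) = d * (2 * Real.pi * Complex.I) := by
        field_simp
      rw [this, Complex.exp_int_mul_two_pi_mul_I]
    rw [geom_sum_eq hx1, hxn]
    simp

lemma sum_zy (n : ℕ) (hn : 0 < n) (i p : ℕ) (hip : i ≤ p) (hpn : p < n) :
    ∑ k ∈ Finset.range n,
      (Complex.exp (2 * Real.pi * Complex.I / n) ^ i
        * Complex.exp (-(2 * Real.pi * Complex.I) / n) ^ (p - i)) ^ k
      = if 2 * i = p then (n : ℂ) else 0 := by
  have key : Complex.exp (2 * Real.pi * Complex.I / n) ^ i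
        * Complex.exp (-(2 * Real.pi * Complex.I) / n) ^ (p - i)
      = Complex.exp (2 * Real.pi * Complex.I * ((2 * (i:ℤ) - p : ℤ) : ℂ) / n) := by
    rw [← Complex.exp_nat_mul, ← Complex.exp_nat_mul, ← Complex.exp_add]
    congr 1
    have h1 : ((p - i : ℕ) : ℂ) = (p : ℂ) - i := by
      push_cast [Nat.cast_sub hip]; ring
    rw [h1]
    push_cast
    ring
  rw [key, sum_exp_pow n hn _ (by omega)]
  rcases eq_or_ne (2 * i) p with h | h
  · rw [if_pos h, if_pos (by omega)]
  · rw [if_neg h, if_neg (by omega)]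

lemma main_sum (n m : ℕ) (hn : 2 ≤ n) (hm2 : m ≤ n - 1) (w : ℂ) (R θ : ℝ) :
    ∑ k ∈ Finset.range n,
      ((w - R * Complex.exp (Complex.I * ((2 * π * k / n + θ : ℝ) : ℂ)))
        * (starRingEnd ℂ) (w - R * Complex.exp (Complex.I * ((2 * π * k / n + θ : ℝ) : ℂ)))) ^ m
    = n * ∑ i ∈ Finset.range (m / 2 + 1),
        (m.choose (2 * i) : ℂ) * ((2 * i).choose i : ℂ) * (R : ℂ) ^ (2 * i)
          * ((‖w‖ : ℝ) : ℂ) ^ (2 * i)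
          * ((R : ℂ) ^ 2 + ((‖w‖ : ℝ) : ℂ) ^ 2) ^ (m - 2 * i) := by
  have hn0 : 0 < n := by omega
  have hnC : (n : ℂ) ≠ 0 := Nat.cast_ne_zero.mpr hn0.ne'
  set L : ℂ := ((‖w‖ : ℝ) : ℂ) with hLdef
  set A : ℂ := (R : ℂ) ^ 2 + L ^ 2 with hA
  set z : ℂ := Complex.exp (2 * Real.pi * Complex.I / n) with hz
  set y : ℂ := Complex.exp (-(2 * Real.pi * Complex.I) / n) with hy
  set E : ℂ := Complex.exp (Complex.I * θ) with hE
  set F : ℂ := Complex.exp (-(Complex.I * θ)) with hF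
  set a : ℂ := R * (starRingEnd ℂ) w * E with ha
  set b : ℂ := R * w * F with hb
  -- basic facts
  have hzy : z * y = 1 := by
    rw [hz, hy, ← Complex.exp_add]
    have h0 : 2 * (Real.pi:ℂ) * Complex.I / n + -(2 * Real.pi * Complex.I) / n = 0 := by ring
    rw [h0, Complex.exp_zero]
  have hEF : E * F = 1 := by
    rw [hE, hF, ← Complex.exp_add, add_neg_cancel, Complex.exp_zero]
  have hww : w * (starRingEnd ℂ) w = L ^ 2 := by
    rw [Complex.mul_conj, hLdef]
    rw [← Complex.sq_norm]
    push_cast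
    ring
  have hab : a * b = (R:ℂ)^2 * L^2 := by
    rw [ha, hb]
    have : (R:ℂ) * (starRingEnd ℂ) w * E * ((R:ℂ) * w * F)
        = (R:ℂ)^2 * (w * (starRingEnd ℂ) w) * (E * F) := by ring
    rw [this, hww, hEF]; ring
  -- per-k form of x_k and conj x_k
  have hx : ∀ k : ℕ, Complex.exp (Complex.I * ((2 * π * k / n + θ : ℝ) : ℂ)) = E * z ^ k := by
    intro k
    rw [hE, hz, ← Complex.exp_nat_mul, ← Complex.exp_add]
    congr 1
    push_cast
    field_simp
    ring
  have hxc : ∀ k : ℕ, (starRingEnd ℂ) (Complex.exp (Complex.I * ((2 * π * k / n + θ : ℝ) : ℂ)))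
      = F * y ^ k := by
    intro k
    rw [← Complex.exp_conj, hF, hy, ← Complex.exp_nat_mul, ← Complex.exp_add]
    congr 1
    rw [map_mul, Complex.conj_I, Complex.conj_ofReal]
    push_cast
    field_simp
    ring
  -- step 1: per-k product
  have step1 : ∀ k : ℕ,
      (w - R * Complex.exp (Complex.I * ((2 * π * k / n + θ : ℝ) : ℂ)))
        * (starRingEnd ℂ) (w - R * Complex.exp (Complex.I * ((2 * π * k / n + θ : ℝ) : ℂ)))
      = A + (-(a * z ^ k + b * y ^ k)) := by
    intro k
    rw [map_sub, map_mul, Complex.conj_ofReal, hxc k, hx k]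
    have hzyk : (z ^ k) * (y ^ k) = 1 := by
      rw [← mul_pow, hzy, one_pow]
    have h1 : E * z ^ k * (F * y ^ k) = 1 := by
      have h2 : E * z ^ k * (F * y ^ k) = (E * F) * ((z * y) ^ k) := by ring
      rw [h2, hEF, hzy, one_pow, mul_one]
    rw [hA, ha, hb]
    linear_combination hww + (R:ℂ)^2 * h1
  -- step 2: double binomial expansion per k
  set cf : ℕ → ℕ → ℂ := fun j i =>
    A ^ j * (-1:ℂ) ^ (m - j) * (m.choose j : ℂ) * ((m - j).choose i : ℂ)
      * a ^ i * b ^ (m - j - i) with hcf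
  have step2 : ∀ k : ℕ,
      (w - R * Complex.exp (Complex.I * ((2 * π * k / n + θ : ℝ) : ℂ)))
        * (starRingEnd ℂ) (w - R * Complex.exp (Complex.I * ((2 * π * k / n + θ : ℝ) : ℂ)))
      = A + (-(a * z ^ k + b * y ^ k)) := step1
  have step3 : ∑ k ∈ Finset.range n,
      ((w - R * Complex.exp (Complex.I * ((2 * π * k / n + θ : ℝ) : ℂ)))
        * (starRingEnd ℂ) (w - R * Complex.exp (Complex.I * ((2 * π * k / n + θ : ℝ) : ℂ)))) ^ m
      = ∑ j ∈ Finset.range (m + 1), ∑ i ∈ Finset.range (m - j + 1),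
          cf j i * ∑ k ∈ Finset.range n, (z ^ i * y ^ (m - j - i)) ^ k := by
    have perk : ∀ k : ℕ,
        ((w - R * Complex.exp (Complex.I * ((2 * π * k / n + θ : ℝ) : ℂ)))
          * (starRingEnd ℂ) (w - R * Complex.exp (Complex.I * ((2 * π * k / n + θ : ℝ) : ℂ)))) ^ m
        = ∑ j ∈ Finset.range (m + 1), ∑ i ∈ Finset.range (m - j + 1),
            cf j i * (z ^ i * y ^ (m - j - i)) ^ k := by
      intro k
      rw [step2 k, add_pow]
      refine Finset.sum_congr rfl (fun j hj => ?_)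
      have hexp : (-(a * z ^ k + b * y ^ k)) ^ (m - j)
          = ∑ i ∈ Finset.range (m - j + 1),
              (-1:ℂ) ^ (m - j) * ((a * z ^ k) ^ i * (b * y ^ k) ^ (m - j - i)
                * (((m - j).choose i : ℕ) : ℂ)) := by
        rw [neg_pow, add_pow, Finset.mul_sum]
      rw [hexp, Finset.mul_sum, Finset.sum_mul]
      refine Finset.sum_congr rfl (fun i hi => ?_)
      rw [hcf]
      ring
    rw [Finset.sum_congr rfl (fun k _ => perk k), Finset.sum_comm]
    refine Finset.sum_congr rfl (fun j _ => ?_)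
    rw [Finset.sum_comm]
    exact Finset.sum_congr rfl (fun i _ => (Finset.mul_sum _ _ _).symm)
  rw [step3]
  -- step 4: evaluate the inner geometric sums
  have step4 : ∀ j ∈ Finset.range (m + 1), ∀ i ∈ Finset.range (m - j + 1),
      cf j i * ∑ k ∈ Finset.range n, (z ^ i * y ^ (m - j - i)) ^ k
      = cf j i * (if 2 * i = m - j then (n : ℂ) else 0) := by
    intro j hj i hi
    simp only [Finset.mem_range] at hj hi
    rw [hz, hy, sum_zy n hn0 i (m - j) (by omega) (by omega)]
  rw [Finset.sum_congr rfl (fun j hj => Finset.sum_congr rfl (fun i hi => step4 j hj i hi))]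
  -- step 5: collapse inner sum
  have step5 : ∀ j ∈ Finset.range (m + 1),
      ∑ i ∈ Finset.range (m - j + 1), cf j i * (if 2 * i = m - j then (n : ℂ) else 0)
      = if 2 * ((m - j) / 2) = m - j then cf j ((m - j) / 2) * n else 0 := by
    intro j hj
    rcases eq_or_ne (2 * ((m - j) / 2)) (m - j) with hp | hp
    · rw [if_pos hp, Finset.sum_eq_single ((m - j) / 2)]
      · rw [if_pos hp]
      · intro i hi hne
        rw [if_neg (by omega), mul_zero]
      · intro hmem
        exact absurd (Finset.mem_range.mpr (by omega)) hmem
    · rw [if_neg hp]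
      apply Finset.sum_eq_zero
      intro i hi
      rw [if_neg (by omega), mul_zero]
  rw [Finset.sum_congr rfl step5]
  -- step 6: reindex over even gaps
  have hinj : ∀ x ∈ Finset.range (m / 2 + 1), ∀ x' ∈ Finset.range (m / 2 + 1),
      m - 2 * x = m - 2 * x' → x = x' := by
    intro x hx x' hx' h
    simp only [Finset.mem_range] at hx hx'
    omega
  have himg : Finset.image (fun i => m - 2 * i) (Finset.range (m / 2 + 1))
      ⊆ Finset.range (m + 1) := by
    intro j hj
    simp only [Finset.mem_image, Finset.mem_range] at hj ⊢
    obtain ⟨i, hi, rfl⟩ := hj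
    omega
  have step6 : ∑ j ∈ Finset.range (m + 1),
        (if 2 * ((m - j) / 2) = m - j then cf j ((m - j) / 2) * n else 0)
      = ∑ i ∈ Finset.range (m / 2 + 1),
        (if 2 * ((m - (m - 2 * i)) / 2) = m - (m - 2 * i)
          then cf (m - 2 * i) ((m - (m - 2 * i)) / 2) * n else 0) := by
    refine Eq.trans ((Finset.sum_subset himg ?_).symm)
      (Finset.sum_image
        (f := fun j => if 2 * ((m - j) / 2) = m - j then cf j ((m - j) / 2) * (n:ℂ) else 0) hinj)
    intro j hj hnot
    simp only [Finset.mem_range] at hj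
    rcases eq_or_ne (2 * ((m - j) / 2)) (m - j) with hc | hc
    · exfalso
      apply hnot
      simp only [Finset.mem_image, Finset.mem_range]
      exact ⟨(m - j) / 2, by omega, by omega⟩
    · rw [if_neg hc]
  rw [step6, Finset.mul_sum]
  -- step 7: evaluate each term
  refine Finset.sum_congr rfl (fun i hi => ?_)
  simp only [Finset.mem_range] at hi
  have h2i : 2 * i ≤ m := by omega
  have hsub : m - (m - 2 * i) = 2 * i := by omega
  rw [hsub]
  have hdiv : 2 * i / 2 = i := by omega
  rw [hdiv, if_pos rfl, hcf]
  simp only []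
  rw [hsub, Nat.choose_symm h2i]
  have hneg : (-1:ℂ) ^ (2 * i) = 1 := by
    rw [pow_mul]; norm_num
  rw [hneg]
  have habi : a ^ i * b ^ i = (R:ℂ) ^ (2 * i) * L ^ (2 * i) := by
    rw [← mul_pow, hab, mul_pow, ← pow_mul, ← pow_mul, Nat.mul_comm 2 i]
  have hii : 2 * i - i = i := by omega
  rw [hii]
  rw [mul_assoc, mul_assoc, mul_assoc, mul_assoc]
  rw [← mul_assoc (a ^ i), habi]
  ring


theorem cyclic_average_formula (n m : ℕ) (hn : 2 ≤ n) (hm1 : 1 ≤ m) (hm2 : m ≤ n - 1)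
    (c M : ℂ) (R θ : ℝ) (hR : 0 < R) (L : ℝ) (hL : L = ‖M - c‖) :
    (1 / n : ℝ) * ∑ k ∈ Finset.range n,
        (‖M - (c + R * Complex.exp (Complex.I * ((2 * π * k / n + θ : ℝ) : ℂ)))‖) ^ (2 * m)
      = (R ^ 2 + L ^ 2) ^ m
        + ∑ k ∈ Finset.Icc 1 (m / 2),
            (m.choose (2 * k) : ℝ) * ((2 * k).choose k : ℝ)
              * R ^ (2 * k) * L ^ (2 * k) * (R ^ 2 + L ^ 2) ^ (m - 2 * k) := by
  have hn0 : 0 < n := by omega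
  have hnR : (n : ℝ) ≠ 0 := Nat.cast_ne_zero.mpr hn0.ne'
  set w : ℂ := M - c with hw
  have hT2 : (R ^ 2 + L ^ 2) ^ m
        + ∑ k ∈ Finset.Icc 1 (m / 2),
            (m.choose (2 * k) : ℝ) * ((2 * k).choose k : ℝ)
              * R ^ (2 * k) * L ^ (2 * k) * (R ^ 2 + L ^ 2) ^ (m - 2 * k)
      = ∑ i ∈ Finset.range (m / 2 + 1),
          (m.choose (2 * i) : ℝ) * ((2 * i).choose i : ℝ)
            * R ^ (2 * i) * L ^ (2 * i) * (R ^ 2 + L ^ 2) ^ (m - 2 * i) := by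
    rw [Finset.range_eq_Ico, Finset.sum_eq_sum_Ico_succ_bot (by omega),
      Finset.Ico_add_one_right_eq_Icc]
    simp
  have hS : (∑ k ∈ Finset.range n,
        (‖M - (c + R * Complex.exp (Complex.I * ((2 * π * k / n + θ : ℝ) : ℂ)))‖) ^ (2 * m))
      = n * ((R ^ 2 + L ^ 2) ^ m
        + ∑ k ∈ Finset.Icc 1 (m / 2),
            (m.choose (2 * k) : ℝ) * ((2 * k).choose k : ℝ)
              * R ^ (2 * k) * L ^ (2 * k) * (R ^ 2 + L ^ 2) ^ (m - 2 * k)) := by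
    rw [← Complex.ofReal_inj, hT2, Complex.ofReal_sum, Complex.ofReal_mul, Complex.ofReal_sum]
    have lhsrw : ∀ k ∈ Finset.range n,
        ((‖M - (c + R * Complex.exp (Complex.I * ((2 * π * k / n + θ : ℝ) : ℂ)))‖ ^ (2 * m) : ℝ) : ℂ)
        = ((w - R * Complex.exp (Complex.I * ((2 * π * k / n + θ : ℝ) : ℂ)))
            * (starRingEnd ℂ) (w - R * Complex.exp (Complex.I * ((2 * π * k / n + θ : ℝ) : ℂ)))) ^ m := by
      intro k _
      have h1 : M - (c + R * Complex.exp (Complex.I * ((2 * π * k / n + θ : ℝ) : ℂ)))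
          = w - R * Complex.exp (Complex.I * ((2 * π * k / n + θ : ℝ) : ℂ)) := by
        rw [hw]; ring
      rw [h1, Complex.ofReal_pow, pow_mul, ← Complex.ofReal_pow, Complex.sq_norm,
        ← Complex.mul_conj]
    rw [Finset.sum_congr rfl lhsrw, main_sum n m hn hm2 w R θ, ← hL]
    norm_cast
  rw [hS]
  field_simp
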